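/- Let G1 and G2 be weakly closed graphs on disjoint vertex sets. Then the join G1 * G2 is a connected weakly closed graph. -/

import Mathlib

open SimpleGraph

/-- The join of two simple graphs on disjoint vertex sets. -/
def joinG {V1 V2 : Type} (G1 : SimpleGraph V1) (G2 : SimpleGraph V2) :
    SimpleGraph (V1 ⊕ V2) where
  Adj a b :=
    match a, b with
    | Sum.inl x, Sum.inl y => G1.Adj x y
    | Sum.inr x, Sum.inr y => G2.Adj x y
    | Sum.inl _, Sum.inr _ => True
    | Sum.inr _, Sum.inl _ => True
  symm := by
    constructor
    intro a b h
    cases a <;> cases b <;> simp_all <;> exact h.symm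
  loopless := by
    constructor
    intro a
    cases a <;> simp

/-- A graph `G` contains an induced copy of the path on `k` vertices iff there is a
graph embedding (= isomorphism onto an induced subgraph) of `pathGraph k` into `G`. -/
def HasInducedPathOn {V : Type} (G : SimpleGraph V) (k : ℕ) : Prop :=
  Nonempty (SimpleGraph.pathGraph k ↪g G)

/-- `G` is `P_k`-free. -/
def PFree {V : Type} (G : SimpleGraph V) (k : ℕ) : Prop :=
  ¬ HasInducedPathOn G k

/-- Length (number of edges) of a longest induced path of `G`. -/
noncomputable def longestInducedPathLen {V : Type} (G : SimpleGraph V) : ℕ :=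
  sSup {k : ℕ | HasInducedPathOn G (k + 1)}

/-- `X` is a dominating set of `G`. -/
def IsDomSet {V : Type} (G : SimpleGraph V) (X : Set V) : Prop :=
  ∀ v ∉ X, ∃ u ∈ X, G.Adj v u

/-- `X` is a connected dominating set of `G`. -/
def IsConnDomSet {V : Type} (G : SimpleGraph V) (X : Set V) : Prop :=
  IsDomSet G X ∧ (G.induce X).Connected

/-- A minimum connected dominating set. -/
def IsMinimumConnDomSet {V : Type} (G : SimpleGraph V) (X : Set V) : Prop :=
  IsConnDomSet G X ∧ ∀ Y : Set V, IsConnDomSet G Y → X.ncard ≤ Y.ncard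

/-- Weakly closed graph: it admits a labeling of its vertices such that whenever
`{a,b}` is an edge and `c` has a label strictly between those of `a` and `b`,
then `c` is adjacent to `a` or to `b`. -/
def WeaklyClosed {V : Type} [Fintype V] (G : SimpleGraph V) : Prop :=
  ∃ e : V ≃ Fin (Fintype.card V),
    ∀ a b c : V, G.Adj a b → e a < e c → e c < e b → (G.Adj a c ∨ G.Adj b c)

/-- Number of connected components. -/
noncomputable def numComp {V : Type} (G : SimpleGraph V) : ℕ :=
  Nat.card G.ConnectedComponent

/-- The collection `C(G)` of sets with the cut point property, together with `∅`. -/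
def cutSets {V : Type} (G : SimpleGraph V) : Set (Set V) :=
  {(∅ : Set V)} ∪
    {T : Set V | T ⊂ Set.univ ∧ ∀ i ∈ T,
      numComp (G.induce (Tᶜ ∪ {i})) < numComp (G.induce Tᶜ)}

/-- The collection `C(H)` for the induced subgraph `H` of `G` on a subset `W`,
viewed as a collection of subsets of the ambient vertex set. -/
def relCutSets {V : Type} (G : SimpleGraph V) (W : Set V) : Set (Set V) :=
  {T : Set V | T ⊆ W ∧ (T = ∅ ∨ (T ≠ W ∧ ∀ i ∈ T,
    numComp (G.induce ((W \ T) ∪ {i})) < numComp (G.induce (W \ T))))}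

/-- `G` is `ℓ`-connected. -/
def LConnected {V : Type} [Fintype V] (G : SimpleGraph V) (ℓ : ℕ) : Prop :=
  ℓ + 1 ≤ Fintype.card V ∧
    ∀ A : Set V, A.ncard < ℓ → (G.induce Aᶜ).Connected

/-- A maximal clique of `G`. -/
def IsMaxClique {V : Type} (G : SimpleGraph V) (s : Set V) : Prop :=
  G.IsClique s ∧ ∀ t : Set V, G.IsClique t → s ⊆ t → s = t

theorem stmt4 {V1 V2 : Type} [Fintype V1] [Fintype V2] [Nonempty V1] [Nonempty V2]
    (G1 : SimpleGraph V1) (G2 : SimpleGraph V2)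
    (h1 : WeaklyClosed G1) (h2 : WeaklyClosed G2) :
    (joinG G1 G2).Connected ∧ WeaklyClosed (joinG G1 G2) := by
  constructor
  · rw [SimpleGraph.connected_iff]
    refine ⟨?_, ⟨Sum.inl Classical.ofNonempty⟩⟩
    intro a b
    have key : ∀ (x : V1) (y : V2), (joinG G1 G2).Reachable (Sum.inl x) (Sum.inr y) :=
      fun x y => SimpleGraph.Adj.reachable (by trivial)
    cases a with
    | inl x =>
      cases b with
      | inl y =>
        exact (key x Classical.ofNonempty).trans (key y Classical.ofNonempty).symm
      | inr y => exact key x y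
    | inr x =>
      cases b with
      | inl y => exact (key y x).symm
      | inr y =>
        exact (key Classical.ofNonempty x).symm.trans (key Classical.ofNonempty y)
  · obtain ⟨e1, he1⟩ := h1
    obtain ⟨e2, he2⟩ := h2
    refine ⟨((Equiv.sumCongr e1 e2).trans finSumFinEquiv).trans
      (finCongr (Fintype.card_sum ..).symm), ?_⟩
    have hval : ∀ v : V1 ⊕ V2,
        ((((Equiv.sumCongr e1 e2).trans finSumFinEquiv).trans
          (finCongr (Fintype.card_sum ..).symm)) v : ℕ) =
        Sum.elim (fun x => (e1 x : ℕ)) (fun y => Fintype.card V1 + (e2 y : ℕ)) v := by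
      rintro (x | y) <;> simp [finSumFinEquiv, Fin.castAdd, Fin.natAdd]
    rintro (x | x) (y | y) (z | z) hab hac hcb <;>
      rw [Fin.lt_iff_val_lt_val, hval, hval] at hac hcb <;>
      simp only [Sum.elim_inl, Sum.elim_inr] at hac hcb
    · exact he1 x y z hab (by omega) (by omega)
    · have := (e1 y).isLt; omega
    · right; trivial
    · left; trivial
    · have := (e1 y).isLt; omega
    · have := (e1 y).isLt; omega
    · have := (e1 z).isLt; omega
    · exact he2 x y z hab (by omega) (by omega)
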